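/- For K = SU(2) and any fixed g ∈ SU(2), the map ψ_g : 𝕋 × SU(2) → SU(2), (λ, h) ↦ [gλ, h] = gλ h λ⁻¹ g⁻¹ h⁻¹, is surjective, where 𝕋 is the diagonal maximal torus. -/

import Mathlib

open Complex

local notation "star'" => (starRingEnd ℂ)

noncomputable def mk2 (a b : ℂ) : Matrix (Fin 2) (Fin 2) ℂ :=
  !![a, b; -(star' b), star' a]

lemma mk2_mul (a b c d : ℂ) :
    mk2 a b * mk2 c d = mk2 (a*c - b*(star' d)) (a*d + b*(star' c)) := by
  simp only [mk2, Matrix.mul_fin_two]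
  congr 1 <;> simp [map_mul, map_add, mul_comm, sub_eq_add_neg] <;> ring

lemma mk2_one : (1 : Matrix (Fin 2) (Fin 2) ℂ) = mk2 1 0 := by
  simp [mk2, Matrix.one_fin_two]

lemma mk2_det (a b : ℂ) : (mk2 a b).det = a * star' a + b * star' b := by
  simp [mk2, Matrix.det_fin_two_of]

lemma mk2_star (a b : ℂ) : star (mk2 a b) = mk2 (star' a) (-b) := by
  simp [mk2, Matrix.star_eq_conjTranspose]
  rw [Matrix.eta_fin_two ((!![a, b; -(star' b), star' a]).conjTranspose)]
  simp [Matrix.conjTranspose_apply]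

lemma mk2_mem (a b : ℂ) (h : a * star' a + b * star' b = 1) :
    mk2 a b ∈ Matrix.unitaryGroup (Fin 2) ℂ := by
  rw [Matrix.mem_unitaryGroup_iff, mk2_star, mk2_mul, mk2_one]
  have h1 : a * star' a - b * star' (-b) = 1 := by rw [map_neg, ← h]; ring
  have h2 : a * (-b) + b * star' (star' a) = 0 := by rw [Complex.conj_conj]; ring
  rw [h1, h2]

lemma mk2_norm_mul (a b c d : ℂ) (h1 : a * star' a + b * star' b = 1)
    (h2 : c * star' c + d * star' d = 1) :
    (a*c - b*(star' d)) * star' (a*c - b*(star' d))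
      + (a*d + b*(star' c)) * star' (a*d + b*(star' c)) = 1 := by
  simp only [map_sub, map_add, map_mul, Complex.conj_conj]
  linear_combination (c * star' c + d * star' d) * h1 + h2

lemma std_form (a b : ℂ) (h1 : a * star' a + b * star' b = 1) :
    ∃ u v : ℂ, u * star' u + v * star' v = 1 ∧
      mk2 a b * mk2 u v
        = mk2 u v * mk2 ((a.re : ℂ) + (Real.sqrt (1 - a.re^2) : ℝ) * Complex.I) 0 := by
  set t : ℝ := a.re with ht
  set c : ℝ := a.im with hc
  set s : ℝ := Real.sqrt (1 - t^2) with hsdef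
  have hnorm : Complex.normSq a + Complex.normSq b = 1 := by
    have := h1
    rw [Complex.mul_conj, Complex.mul_conj] at this
    exact_mod_cast this
  have hna : Complex.normSq a = t^2 + c^2 := by
    rw [Complex.normSq_apply]; ring
  have hkey : 1 - t^2 = c^2 + Complex.normSq b := by
    rw [← hnorm, hna]; ring
  have hbnn : 0 ≤ Complex.normSq b := Complex.normSq_nonneg b
  have hs0 : 0 ≤ s := Real.sqrt_nonneg _
  have hs2 : s^2 = c^2 + Complex.normSq b := by
    rw [hsdef, Real.sq_sqrt (by nlinarith), hkey]
  have hare : a = (t:ℂ) + (c:ℝ) * Complex.I := (Complex.re_add_im a).symm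
  by_cases hb : b = 0
  · have hnb : Complex.normSq b = 0 := by simp [hb]
    have hs2' : s^2 = c^2 := by rw [hs2, hnb]; ring
    by_cases hcpos : 0 ≤ c
    · have hsc : s = c := by nlinarith
      refine ⟨1, 0, by simp, ?_⟩
      rw [mk2_mul, mk2_mul]
      simp [hb, hare, hsc]
    · have hsc : s = -c := by nlinarith
      refine ⟨0, 1, by simp, ?_⟩
      rw [mk2_mul, mk2_mul]
      simp [hb, hare, hsc]
  · have hnbpos : 0 < Complex.normSq b := Complex.normSq_pos.mpr hb
    have hcs : c < s := by nlinarith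
    have hspos : 0 < s := by nlinarith
    set N : ℝ := Real.sqrt (2*s*(s-c)) with hNdef
    have hN2 : N^2 = 2*s*(s-c) := Real.sq_sqrt (by nlinarith)
    have hNpos : 0 < N := Real.sqrt_pos.mpr (by nlinarith)
    have hNne : (N:ℂ) ≠ 0 := by exact_mod_cast hNpos.ne'
    have hN2c : (N:ℂ)^2 = 2*(s:ℂ)*((s:ℂ)-(c:ℂ)) := by exact_mod_cast hN2
    have hnb2 : Complex.normSq b = s^2 - c^2 := by linarith
    have hb' : b * star' b = (s:ℂ)^2 - (c:ℂ)^2 := by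
      rw [Complex.mul_conj, hnb2]; push_cast; ring
    set u : ℂ := b / (N:ℂ) with hu
    set v : ℂ := Complex.I * (((s:ℂ) - (c:ℂ)) / (N:ℂ)) with hv
    refine ⟨u, v, ?_, ?_⟩
    · rw [hu, hv]
      simp only [map_div₀, map_mul, map_sub, Complex.conj_I, Complex.conj_ofReal]
      field_simp
      linear_combination hb' - hN2c - Complex.I_sq * ((s:ℂ)-(c:ℂ))^2
    · rw [mk2_mul, mk2_mul]
      have e1 : a * u - b * star' v = u * ((t:ℂ) + (s:ℂ) * Complex.I) - v * star' 0 := by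
        rw [hu, hv, hare]
        simp only [map_mul, map_div₀, map_sub, Complex.conj_I, Complex.conj_ofReal, map_zero]
        field_simp
        ring
      have e2 : a * v + b * star' u = u * 0 + v * star' ((t:ℂ) + (s:ℂ) * Complex.I) := by
        rw [hu, hv, hare]
        simp only [map_mul, map_div₀, map_add, Complex.conj_I, Complex.conj_ofReal,
          Complex.conj_conj]
        field_simp
        linear_combination hb' + ((s:ℂ)^2-(c:ℂ)^2) * Complex.I_sq
      rw [e1, e2]

lemma mk2_mul_star (u v : ℂ) (h : u * star' u + v * star' v = 1) :
    mk2 u v * mk2 (star' u) (-v) = 1 := by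
  rw [mk2_mul, mk2_one]
  have h1 : u * star' u - v * star' (-v) = 1 := by rw [map_neg, ← h]; ring
  have h2 : u * (-v) + v * star' (star' u) = 0 := by rw [Complex.conj_conj]; ring
  rw [h1, h2]

lemma mk2_star_mul (u v : ℂ) (h : u * star' u + v * star' v = 1) :
    mk2 (star' u) (-v) * mk2 u v = 1 := by
  rw [mk2_mul, mk2_one]
  have h1 : star' u * u - (-v) * star' v = 1 := by rw [← h]; ring
  have h2 : star' u * v + (-v) * star' u = 0 := by ring
  rw [h1, h2]

lemma su2_conj (a b a' b' : ℂ) (h1 : a * star' a + b * star' b = 1)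
    (h2 : a' * star' a' + b' * star' b' = 1) (hre : a.re = a'.re) :
    ∃ u v : ℂ, u * star' u + v * star' v = 1 ∧
      mk2 u v * mk2 a b = mk2 a' b' * mk2 u v := by
  obtain ⟨u1, v1, n1, e1⟩ := std_form a b h1
  obtain ⟨u2, v2, n2, e2⟩ := std_form a' b' h2
  rw [hre] at e1
  have n1' : star' u1 * star' (star' u1) + (-v1) * star' (-v1) = 1 := by
    rw [Complex.conj_conj, map_neg, ← n1]; ring
  refine ⟨u2 * star' u1 - v2 * star' (-v1), u2 * (-v1) + v2 * star' (star' u1),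
    mk2_norm_mul _ _ _ _ n2 n1', ?_⟩
  rw [← mk2_mul]
  have hSA : mk2 (star' u1) (-v1) * mk2 a b
      = mk2 ((a'.re : ℂ) + (Real.sqrt (1 - a'.re^2) : ℝ) * Complex.I) 0
        * mk2 (star' u1) (-v1) := by
    have h6 : mk2 a b = mk2 u1 v1
        * mk2 ((a'.re : ℂ) + (Real.sqrt (1 - a'.re^2) : ℝ) * Complex.I) 0
        * mk2 (star' u1) (-v1) := by
      rw [← e1, mul_assoc, mk2_mul_star u1 v1 n1, mul_one]
    rw [h6, ← mul_assoc, ← mul_assoc, mk2_star_mul u1 v1 n1, one_mul]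
  rw [mul_assoc, hSA, ← mul_assoc, ← e2, mul_assoc]

lemma su2_entries (k : Matrix.unitaryGroup (Fin 2) ℂ)
    (hk : (k : Matrix (Fin 2) (Fin 2) ℂ).det = 1) :
    (k : Matrix (Fin 2) (Fin 2) ℂ)
        = mk2 ((k : Matrix (Fin 2) (Fin 2) ℂ) 0 0) ((k : Matrix (Fin 2) (Fin 2) ℂ) 0 1) ∧
      (k : Matrix (Fin 2) (Fin 2) ℂ) 0 0 * star' ((k : Matrix (Fin 2) (Fin 2) ℂ) 0 0)
        + (k : Matrix (Fin 2) (Fin 2) ℂ) 0 1 * star' ((k : Matrix (Fin 2) (Fin 2) ℂ) 0 1) = 1 := by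
  set K : Matrix (Fin 2) (Fin 2) ℂ := (k : Matrix (Fin 2) (Fin 2) ℂ) with hK
  have hu : K * star K = 1 := Matrix.mem_unitaryGroup_iff.mp k.2
  have hinv : star K = K⁻¹ := (Matrix.inv_eq_right_inv hu).symm
  have hadj : star K = K.adjugate := by
    rw [hinv, Matrix.inv_def, hk]; simp
  have h00 : star' (K 0 0) = K 1 1 := by
    have := congrFun (congrFun hadj 0) 0
    simpa [Matrix.star_eq_conjTranspose, Matrix.conjTranspose_apply,
      Matrix.adjugate_fin_two] using this
  have h01 : star' (K 0 1) = -(K 1 0) := by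
    have := congrFun (congrFun hadj 1) 0
    simpa [Matrix.star_eq_conjTranspose, Matrix.conjTranspose_apply,
      Matrix.adjugate_fin_two] using this
  constructor
  · symm
    ext i j
    fin_cases i <;> fin_cases j <;>
      simp [mk2, h00, h01]
  · have hdet : K 0 0 * K 1 1 - K 0 1 * K 1 0 = 1 := by
      rw [← Matrix.det_fin_two]; exact hk
    rw [h00, h01]
    linear_combination hdet

/-- For `K = SU(2)` and any fixed `g ∈ SU(2)`, the map
`ψ_g : 𝕋 × SU(2) → SU(2), (λ, h) ↦ [gλ, h] = gλ h (gλ)⁻¹ h⁻¹` is surjective, where `𝕋` is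
the diagonal maximal torus.  Here `SU(2)` is realized as the elements of the unitary group
`U(2)` of determinant one. -/
theorem stmt14 (g : Matrix.unitaryGroup (Fin 2) ℂ)
    (hg : (g : Matrix (Fin 2) (Fin 2) ℂ).det = 1) :
    ∀ k : Matrix.unitaryGroup (Fin 2) ℂ, (k : Matrix (Fin 2) (Fin 2) ℂ).det = 1 →
      ∃ lam h : Matrix.unitaryGroup (Fin 2) ℂ,
        (lam : Matrix (Fin 2) (Fin 2) ℂ).det = 1 ∧
          (h : Matrix (Fin 2) (Fin 2) ℂ).det = 1 ∧
          (lam : Matrix (Fin 2) (Fin 2) ℂ) 0 1 = 0 ∧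
          (lam : Matrix (Fin 2) (Fin 2) ℂ) 1 0 = 0 ∧
          (g * lam) * h * (g * lam)⁻¹ * h⁻¹ = k := by
  intro k hk
  obtain ⟨hgform, hgnorm⟩ := su2_entries g hg
  obtain ⟨hkform, hknorm⟩ := su2_entries k hk
  set p : ℂ := (g : Matrix (Fin 2) (Fin 2) ℂ) 0 0 with hp
  set q : ℂ := (g : Matrix (Fin 2) (Fin 2) ℂ) 0 1 with hq
  set c : ℂ := (k : Matrix (Fin 2) (Fin 2) ℂ) 0 0 with hc
  set d : ℂ := (k : Matrix (Fin 2) (Fin 2) ℂ) 0 1 with hd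
  set a : ℂ := star' p * (c - 1) + q * star' d with ha
  -- choose z on the unit circle with star' z * a + z * star' a = 0
  obtain ⟨z, hz1, hz2⟩ : ∃ z : ℂ, z * star' z = 1 ∧ star' z * a + z * star' a = 0 := by
    by_cases haz : a = 0
    · exact ⟨1, by simp, by simp [haz]⟩
    · refine ⟨Complex.I * (a / (‖a‖ : ℝ)), ?_, ?_⟩
      · have hr : ((‖a‖ : ℝ) : ℂ) ≠ 0 := by
          simpa using (norm_ne_zero_iff.mpr haz)
        simp only [map_mul, map_div₀, Complex.conj_I, Complex.conj_ofReal]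
        field_simp
        rw [show -(Complex.I^2 * a * (starRingEnd ℂ) a)
            = -(Complex.I^2) * (a * (starRingEnd ℂ) a) from by ring,
          Complex.I_sq, Complex.mul_conj]
        norm_cast
        rw [Complex.normSq_eq_norm_sq]
        norm_num
      · simp only [map_mul, map_div₀, Complex.conj_I, Complex.conj_ofReal]
        ring
  -- the torus element
  have hlamnorm : z * star' z + (0:ℂ) * star' 0 = 1 := by simpa using hz1
  set lam : Matrix.unitaryGroup (Fin 2) ℂ := ⟨mk2 z 0, mk2_mem z 0 hlamnorm⟩ with hlam
  -- entries of A = star (g * lam)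
  set α : ℂ := star' p * star' z with hα
  set β : ℂ := -(q * star' z) with hβ
  set α' : ℂ := α * c - β * star' d with hα'
  set β' : ℂ := α * d + β * star' c with hβ'
  have hglam : (g : Matrix (Fin 2) (Fin 2) ℂ) * mk2 z 0 = mk2 (p * z) (q * star' z) := by
    rw [hgform, mk2_mul]
    rw [show p * z - q * star' (0:ℂ) = p * z by simp, show p * 0 + q * star' z = q * star' z by ring]
  have hA : star ((g : Matrix (Fin 2) (Fin 2) ℂ) * mk2 z 0) = mk2 α β := by
    rw [hglam, mk2_star, hα, hβ, map_mul]
  have nA : α * star' α + β * star' β = 1 := by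
    rw [hα, hβ]
    simp only [map_mul, map_neg, Complex.conj_conj]
    linear_combination (z * star' z) * hgnorm + hz1
  have nB : α' * star' α' + β' * star' β' = 1 := mk2_norm_mul α β c d nA hknorm
  -- equal real parts
  have hdiff : (α' - α) + star' (α' - α) = 0 := by
    have h8 : α' - α = star' z * a := by
      rw [hα', hα, hβ, ha]; ring
    rw [h8, map_mul, Complex.conj_conj]
    linear_combination hz2
  have hre : α.re = α'.re := by
    have h10 : (α' - α).re = 0 := by
      have h9 : ((2 * (α' - α).re : ℝ) : ℂ) = 0 := by
        rw [← Complex.add_conj]; exact hdiff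
      have h9' : 2 * (α' - α).re = 0 := Complex.ofReal_eq_zero.mp h9
      linarith
    have h11 : α'.re - α.re = 0 := by rw [← Complex.sub_re]; exact h10
    linarith
  obtain ⟨u, v, nuv, hcomm⟩ := su2_conj α β α' β' nA nB hre
  set h : Matrix.unitaryGroup (Fin 2) ℂ := ⟨mk2 u v, mk2_mem u v nuv⟩ with hh
  refine ⟨lam, h, ?_, ?_, ?_, ?_, ?_⟩
  · show (mk2 z 0).det = 1
    rw [mk2_det]; simpa using hz1
  · show (mk2 u v).det = 1
    rw [mk2_det]; exact nuv
  · show mk2 z 0 0 1 = 0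
    simp [mk2]
  · show mk2 z 0 1 0 = 0
    simp [mk2]
  · have key : h * (g * lam)⁻¹ = (g * lam)⁻¹ * (k * h) := by
      apply Subtype.coe_injective
      show (h : Matrix (Fin 2) (Fin 2) ℂ) * ((g * lam)⁻¹ : Matrix.unitaryGroup (Fin 2) ℂ)
          = ((g * lam)⁻¹ : Matrix.unitaryGroup (Fin 2) ℂ) * ((k : Matrix (Fin 2) (Fin 2) ℂ) * h)
      rw [Matrix.UnitaryGroup.inv_val, Matrix.UnitaryGroup.mul_val]
      show mk2 u v * star ((g : Matrix (Fin 2) (Fin 2) ℂ) * mk2 z 0)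
          = star ((g : Matrix (Fin 2) (Fin 2) ℂ) * mk2 z 0) * ((k : Matrix (Fin 2) (Fin 2) ℂ) * mk2 u v)
      rw [hA, hkform, ← mul_assoc, mk2_mul α β c d, ← hα', ← hβ', hcomm]
    calc (g * lam) * h * (g * lam)⁻¹ * h⁻¹
        = (g * lam) * (h * (g * lam)⁻¹) * h⁻¹ := by group
      _ = (g * lam) * ((g * lam)⁻¹ * (k * h)) * h⁻¹ := by rw [key]
      _ = k := by group
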